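/- Let n ≥ 2. The powerful covering number of the dihedral group DihedralGroup (2^n) of order 2^(n+1) equals 2^(n-1) + 1; that is, there exists a cover of DihedralGroup (2^n) by 2^(n-1) + 1 proper powerful subgroups, and every cover of DihedralGroup (2^n) by proper powerful subgroups contains at least 2^(n-1) + 1 subgroups. -/

import Mathlib

open DihedralGroup

/-- A finite `p`-group `H` is *powerful* if, when `p` is odd, `[H,H]` is contained in the
subgroup generated by `p`-th powers, and when `p = 2`, `[H,H]` is contained in the subgroup
generated by fourth powers. -/
def IsPowerful (p : ℕ) (H : Type*) [Group H] : Prop :=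
  commutator H ≤ Subgroup.closure {x : H | ∃ g : H, x = g ^ (if p = 2 then 4 else p)}

/-- A cover of a group by proper subgroups. -/
def IsSubgroupCover {G : Type*} [Group G] (S : Finset (Subgroup G)) : Prop :=
  (∀ H ∈ S, H ≠ ⊤) ∧ ∀ g : G, ∃ H ∈ S, g ∈ H

namespace DPCN

variable {m : ℕ}

open scoped commutatorElement

theorem my_r_pow (i : ZMod m) (k : ℕ) : (r i : DihedralGroup m) ^ k = r ((k : ZMod m) * i) := by
  induction k with
  | zero => simp [one_def, -r_zero]
  | succ k ih => rw [pow_succ, ih, r_mul_r]; congr 1; push_cast; ring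

theorem my_sr_inv (i : ZMod m) : (sr i : DihedralGroup m)⁻¹ = sr i := by
  apply inv_eq_of_mul_eq_one_right; simp [one_def, -r_zero]

theorem my_r_inv (i : ZMod m) : (r i : DihedralGroup m)⁻¹ = r (-i) := by
  apply inv_eq_of_mul_eq_one_right; simp [one_def, -r_zero]

theorem my_sr_pow4 (i : ZMod m) : (sr i : DihedralGroup m) ^ 4 = 1 := by
  have h2 : (sr i : DihedralGroup m) ^ 2 = 1 := by rw [pow_two]; simp [one_def, -r_zero]
  rw [show (4:ℕ) = 2*2 from rfl, pow_mul, h2, one_pow]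

theorem my_comm_sr (a b : ZMod m) : ⁅(sr a : DihedralGroup m), sr b⁆ = r (2*(b-a)) := by
  rw [commutatorElement_def, my_sr_inv, my_sr_inv]
  simp only [sr_mul_sr, r_mul_sr, sr_mul_sr]
  congr 1; ring

theorem double_ker {n : ℕ} (hn : 1 ≤ n) (x : ZMod (2^n)) (hx : x + x = 0) :
    x = 0 ∨ x = ((2^(n-1) : ℕ) : ZMod (2^n)) := by
  haveI : NeZero (2^n) := ⟨by positivity⟩
  have h1 : ((2 * x.val : ℕ) : ZMod (2^n)) = 0 := by
    push_cast [ZMod.natCast_zmod_val]; rw [two_mul, hx]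
  rw [ZMod.natCast_eq_zero_iff] at h1
  have hpow : 2^n = 2 * 2^(n-1) := by rw [← pow_succ']; congr 1; omega
  have h2 : 2^(n-1) ∣ x.val := by
    obtain ⟨e, he⟩ := h1
    have hv : 2 * x.val = 2 * (2^(n-1) * e) := by rw [← mul_assoc, ← hpow]; exact he
    exact ⟨e, Nat.eq_of_mul_eq_mul_left two_pos hv⟩
  obtain ⟨d, hd⟩ := h2
  have hlt : x.val < 2^n := x.val_lt
  have hn2 : (2:ℕ)^n = 2^(n-1) * 2 := by rw [← pow_succ]; congr 1; omega
  have hd2 : d < 2 := by nlinarith [pow_pos (by norm_num : 0 < 2) (n-1)]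
  interval_cases d
  · left; have hv0 : x.val = 0 := by omega
    rw [← ZMod.natCast_zmod_val x, hv0]; simp
  · right; rw [← ZMod.natCast_zmod_val x, hd]; simp

/-- The rotation subgroup. -/
def rotSub (m : ℕ) : Subgroup (DihedralGroup m) where
  carrier := {x | ∃ i, x = r i}
  one_mem' := ⟨0, rfl⟩
  mul_mem' := by rintro _ _ ⟨i, rfl⟩ ⟨j, rfl⟩; exact ⟨i + j, rfl⟩
  inv_mem' := by rintro _ ⟨i, rfl⟩; exact ⟨-i, rfl⟩

theorem mem_rotSub (x : DihedralGroup m) : x ∈ rotSub m ↔ ∃ i, x = r i := Iff.rfl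

/-- A Klein four subgroup containing reflections `sr k` and `sr (k+c)`. -/
def klein (m : ℕ) (c : ZMod m) (hc : c + c = 0) (k : ZMod m) : Subgroup (DihedralGroup m) where
  carrier := {1, r c, sr k, sr (k + c)}
  one_mem' := by left; rfl
  mul_mem' := by
    have hc' : -c = c := by linear_combination -hc
    rintro x y (rfl | rfl | rfl | rfl) (rfl | rfl | rfl | rfl) <;>
      simp [one_def, -r_zero, sub_eq_add_neg, hc', Set.mem_insert_iff] <;>
      exact Or.inl (by linear_combination hc)
  inv_mem' := by
    have hc' : -c = c := by linear_combination -hc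
    rintro x (rfl | rfl | rfl | rfl) <;>
      simp [one_def, -r_zero, my_sr_inv, my_r_inv, hc', Set.mem_insert_iff]

theorem mem_klein {c : ZMod m} (hc : c + c = 0) (k : ZMod m) (x : DihedralGroup m) :
    x ∈ klein m c hc k ↔ x = 1 ∨ x = r c ∨ x = sr k ∨ x = sr (k + c) := Iff.rfl

theorem isPowerful_of_comm {G : Type*} [Group G] (H : Subgroup G)
    (h : ∀ x y : H, x * y = y * x) : IsPowerful 2 H := by
  unfold IsPowerful
  rw [commutator_def, Subgroup.commutator_le]
  intro g1 _ g2 _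
  rw [commutatorElement_eq_one_iff_commute.mpr (h g1 g2)]
  exact Subgroup.one_mem _

theorem comm_of_sq {G : Type*} [Group G] (h : ∀ x : G, x * x = 1) (x y : G) :
    x * y = y * x := by
  have hinv : ∀ z : G, z⁻¹ = z := fun z => inv_eq_of_mul_eq_one_right (h z)
  calc x * y = (x*y)⁻¹ := (hinv _).symm
  _ = y⁻¹ * x⁻¹ := mul_inv_rev _ _
  _ = y * x := by rw [hinv, hinv]

theorem rotSub_powerful : IsPowerful 2 (rotSub m) := by
  apply isPowerful_of_comm
  rintro ⟨x, i, rfl⟩ ⟨y, j, rfl⟩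
  ext
  show r i * r j = r j * r i
  simp [add_comm]

theorem klein_powerful {c : ZMod m} (hc : c + c = 0) (k : ZMod m) :
    IsPowerful 2 (klein m c hc k) := by
  apply isPowerful_of_comm
  apply comm_of_sq
  rintro ⟨x, hx | hx | hx | hx⟩ <;> subst hx <;> ext <;>
    show _ * _ = (1 : DihedralGroup m) <;> simp [one_def, -r_zero, hc]


/-- If a proper subgroup contains `r 1` it contains no reflection. -/
theorem no_refl_of_r_one {m : ℕ} [NeZero m] (H : Subgroup (DihedralGroup m)) (hH : H ≠ ⊤)
    (h1 : r 1 ∈ H) (i : ZMod m) : sr i ∉ H := by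
  intro hi
  apply hH
  rw [Subgroup.eq_top_iff']
  have hrot : ∀ j : ZMod m, r j ∈ H := by
    intro j
    have := H.pow_mem h1 j.val
    rwa [r_one_pow, ZMod.natCast_zmod_val] at this
  rintro (x | x)
  · exact hrot x
  · have := H.mul_mem hi (hrot (x - i))
    rw [sr_mul_r] at this
    rwa [show i + (x - i) = x by ring] at this

/-- Key lemma: in a proper powerful subgroup, reflection indices differ by 2-torsion. -/
theorem refl_diff {n : ℕ} (hn : 1 ≤ n) (H : Subgroup (DihedralGroup (2^n)))
    (hpow : IsPowerful 2 H) {a b : ZMod (2^n)} (ha : sr a ∈ H) (hb : sr b ∈ H) :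
    (b - a) + (b - a) = 0 := by
  set G := DihedralGroup (2^n)
  -- the subgroup of fourth powers of rotations of H
  set L : Subgroup G :=
    { carrier := {x | ∃ j : ZMod (2^n), r j ∈ H ∧ x = r (4*j)}
      one_mem' := ⟨0, show r (0 : ZMod (2^n)) ∈ H from H.one_mem, by rw [mul_zero]; exact one_def⟩
      mul_mem' := by
        rintro _ _ ⟨j, hj, rfl⟩ ⟨j', hj', rfl⟩
        exact ⟨j + j', by simpa using H.mul_mem hj hj', by rw [r_mul_r]; congr 1; ring⟩
      inv_mem' := by
        rintro _ ⟨j, hj, rfl⟩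
        refine ⟨-j, by simpa [my_r_inv] using H.inv_mem hj, ?_⟩
        rw [my_r_inv]; congr 1; ring } with hLdef
  have memL : ∀ x : G, x ∈ L ↔ ∃ j : ZMod (2^n), r j ∈ H ∧ x = r (4*j) := fun x => Iff.rfl
  -- commutators of H lie in L
  have hcomm : ∀ u v : H, ⁅(u : G), (v : G)⁆ ∈ L := by
    intro u v
    have h1 : ⁅u, v⁆ ∈ commutator H := by
      rw [commutator_def]
      exact Subgroup.commutator_mem_commutator (Subgroup.mem_top u) (Subgroup.mem_top v)
    have h2 := hpow h1
    have h3 : Subgroup.closure {x : H | ∃ g : H, x = g ^ (if 2 = 2 then 4 else 2)}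
        ≤ L.comap H.subtype := by
      rw [Subgroup.closure_le]
      rintro _ ⟨g, rfl⟩
      simp only [if_pos rfl, Subgroup.coe_comap, Set.mem_preimage, SetLike.mem_coe]
      show ((g ^ 4 : H) : G) ∈ L
      rw [SubmonoidClass.coe_pow]
      rcases hg : (g : G) with j | j
      · rw [my_r_pow]
        exact ⟨j, hg ▸ g.2, by norm_num⟩
      · rw [my_sr_pow4]
        exact L.one_mem
    have := h3 h2
    rw [Subgroup.mem_comap, map_commutatorElement] at this; exact this
  -- for any rotation in H (given a reflection `sr a ∈ H`), 2j = 4z for some rotation z in H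
  have hstep : ∀ j : ZMod (2^n), r j ∈ H → ∃ z, r z ∈ H ∧ 2*j = 4*z := by
    intro j hj
    have hb' : sr (a + j) ∈ H := by simpa using H.mul_mem ha hj
    have := hcomm ⟨sr a, ha⟩ ⟨sr (a + j), hb'⟩
    rw [show ((⟨sr a, ha⟩ : H) : G) = sr a from rfl,
        show ((⟨sr (a+j), hb'⟩ : H) : G) = sr (a+j) from rfl, my_comm_sr] at this
    rw [show 2*(a + j - a) = 2*j by ring] at this
    obtain ⟨z, hz, hzz⟩ := this
    exact ⟨z, hz, by injection hzz⟩
  -- iterate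
  have key : ∀ s : ℕ, ∀ j : ZMod (2^n), r j ∈ H → ∃ z, r z ∈ H ∧ 2*j = 2^(s+1)*z := by
    intro s
    induction s with
    | zero => intro j hj; exact ⟨j, hj, by ring⟩
    | succ s ih =>
      intro j hj
      obtain ⟨y, hy, hjy⟩ := ih j hj
      obtain ⟨z, hz, hyz⟩ := hstep y hy
      exact ⟨z, hz, by linear_combination hjy + (2:ZMod (2^n))^s * hyz⟩
  have hdiff : r (b - a) ∈ H := by simpa using H.mul_mem ha hb
  obtain ⟨z, hz, hzz⟩ := key (n - 1) (b - a) hdiff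
  have h2n : ((2 : ZMod (2^n)))^(n-1+1) = 0 := by
    have : ((2^n : ℕ) : ZMod (2^n)) = 0 := ZMod.natCast_self _
    push_cast at this
    rwa [show n - 1 + 1 = n by omega]
  rw [h2n, zero_mul] at hzz
  linear_combination hzz

end DPCN


open DPCN in
/-- The powerful covering number of `DihedralGroup (2^n)` is `2^(n-1) + 1`: there is a
cover by `2^(n-1) + 1` proper powerful subgroups, and every cover by proper powerful
subgroups has at least `2^(n-1) + 1` members. -/
theorem dihedral_powerfulCoveringNumber (n : ℕ) (hn : 2 ≤ n) :
    (∃ S : Finset (Subgroup (DihedralGroup (2 ^ n))),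
      S.card = 2 ^ (n - 1) + 1 ∧ IsSubgroupCover S ∧ ∀ H ∈ S, IsPowerful 2 H) ∧
    (∀ S : Finset (Subgroup (DihedralGroup (2 ^ n))),
      IsSubgroupCover S → (∀ H ∈ S, IsPowerful 2 H) → 2 ^ (n - 1) + 1 ≤ S.card) := by
  classical
  haveI : NeZero (2^n) := ⟨by positivity⟩
  haveI : Fact (1 < 2^n) := ⟨by
    calc 1 < 2^1 := by norm_num
    _ ≤ 2^n := Nat.pow_le_pow_right (by norm_num) (by omega)⟩
  have hps : (2:ℕ)^n = 2^(n-1) + 2^(n-1) := by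
    rw [← two_mul, ← pow_succ']
    congr 1; omega
  have hppos : 0 < (2:ℕ)^(n-1) := by positivity
  have hlt : (2:ℕ)^(n-1) < 2^n := by omega
  set c : ZMod (2^n) := ((2^(n-1) : ℕ) : ZMod (2^n)) with hcdef
  have hc : c + c = 0 := by
    rw [hcdef, ← Nat.cast_add, ← hps, ZMod.natCast_self]
  have hcval : c.val = 2^(n-1) := ZMod.val_cast_of_lt hlt
  constructor
  · -- upper bound: explicit cover
    have hinj : Set.InjOn (fun k : ℕ => klein (2^n) c hc (k : ZMod (2^n)))
        (Finset.range (2^(n-1))) := by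
      intro k hk k' hk' h
      simp only at h
      rw [Finset.mem_coe, Finset.mem_range] at hk hk'
      have hmem : sr (k : ZMod (2^n)) ∈ klein (2^n) c hc (k' : ZMod (2^n)) := by
        rw [← h]
        exact (mem_klein hc _ _).mpr (Or.inr (Or.inr (Or.inl rfl)))
      rcases (mem_klein hc _ _).mp hmem with h1 | h1 | h1 | h1
      · exact absurd h1 (by simp [one_def, -r_zero])
      · exact absurd h1 (by simp)
      · have := congrArg ZMod.val (sr.inj h1)
        rw [ZMod.val_cast_of_lt (by omega), ZMod.val_cast_of_lt (by omega)] at this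
        exact this
      · exfalso
        have h2 : (k : ZMod (2^n)) = ((k' + 2^(n-1) : ℕ) : ZMod (2^n)) := by
          rw [sr.inj h1, hcdef]; push_cast; ring
        have := congrArg ZMod.val h2
        rw [ZMod.val_cast_of_lt (by omega), ZMod.val_cast_of_lt (by omega)] at this
        omega
    have hnm : rotSub (2^n) ∉
        (Finset.range (2^(n-1))).image (fun k : ℕ => klein (2^n) c hc (k : ZMod (2^n))) := by
      intro hmem
      obtain ⟨k, _, hkl⟩ := Finset.mem_image.mp hmem
      have hx : sr (k : ZMod (2^n)) ∈ rotSub (2^n) := by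
        rw [← hkl]
        exact (mem_klein hc _ _).mpr (Or.inr (Or.inr (Or.inl rfl)))
      obtain ⟨i, hi⟩ := (mem_rotSub _).mp hx
      exact absurd hi (by simp)
    refine ⟨insert (rotSub (2^n))
      ((Finset.range (2^(n-1))).image (fun k : ℕ => klein (2^n) c hc (k : ZMod (2^n)))), ?_, ?_, ?_⟩
    · rw [Finset.card_insert_of_notMem hnm, Finset.card_image_of_injOn hinj, Finset.card_range]
    · constructor
      · -- properness
        intro H hH
        rcases Finset.mem_insert.mp hH with rfl | hH'
        · intro heq
          obtain ⟨i, hi⟩ := (mem_rotSub _).mp ((Subgroup.eq_top_iff' _).mp heq (sr 0))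
          exact absurd hi (by simp)
        · obtain ⟨k, _, rfl⟩ := Finset.mem_image.mp hH'
          intro heq
          have hmem := (Subgroup.eq_top_iff' _).mp heq (r 1)
          rcases (mem_klein hc _ _).mp hmem with h1 | h1 | h1 | h1
          · rw [one_def] at h1
            have := congrArg ZMod.val (r.inj h1)
            rw [ZMod.val_one, ZMod.val_zero] at this
            exact absurd this (by norm_num)
          · have := congrArg ZMod.val (r.inj h1)
            rw [ZMod.val_one, hcval] at this
            have hge2 : (2:ℕ)^(n-1) ≥ 2 := by
              calc (2:ℕ) = 2^1 := by norm_num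
              _ ≤ 2^(n-1) := Nat.pow_le_pow_right (by norm_num) (by omega)
            omega
          · exact absurd h1 (by simp)
          · exact absurd h1 (by simp)
      · -- cover
        rintro (i | i)
        · exact ⟨rotSub (2^n), Finset.mem_insert_self _ _, ⟨i, rfl⟩⟩
        · set k := i.val % 2^(n-1) with hkdef
          refine ⟨klein (2^n) c hc (k : ZMod (2^n)),
            Finset.mem_insert_of_mem (Finset.mem_image.mpr
              ⟨k, Finset.mem_range.mpr (Nat.mod_lt _ hppos), rfl⟩), ?_⟩
          have hdm : 2^(n-1) * (i.val / 2^(n-1)) + k = i.val := Nat.div_add_mod _ _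
          have hq : i.val / 2^(n-1) < 2 := by
            rw [Nat.div_lt_iff_lt_mul hppos]
            have := i.val_lt
            omega
          have hi : i = ((i.val : ℕ) : ZMod (2^n)) := (ZMod.natCast_zmod_val i).symm
          interval_cases h : i.val / 2^(n-1)
          · apply (mem_klein hc _ _).mpr
            refine Or.inr (Or.inr (Or.inl ?_))
            congr 1
            rw [hi]
            congr 1
            omega
          · apply (mem_klein hc _ _).mpr
            refine Or.inr (Or.inr (Or.inr ?_))
            congr 1
            rw [hi, hcdef, ← Nat.cast_add]
            congr 1
            omega
    · -- powerful
      intro H hH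
      rcases Finset.mem_insert.mp hH with rfl | hH'
      · exact rotSub_powerful
      · obtain ⟨k, _, rfl⟩ := Finset.mem_image.mp hH'
        exact klein_powerful hc _
  · -- lower bound
    intro S hcov hpows
    obtain ⟨hprop, hcovfn⟩ := hcov
    obtain ⟨H₁, hH₁S, hr1⟩ := hcovfn (r 1)
    choose f hfS hf using fun i : ZMod (2^n) => hcovfn (sr i)
    set T := Finset.image f Finset.univ with hT
    have hTsub : T ⊆ S.erase H₁ := by
      intro t ht
      obtain ⟨i, _, rfl⟩ := Finset.mem_image.mp ht
      refine Finset.mem_erase.mpr ⟨?_, hfS i⟩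
      intro heq
      exact no_refl_of_r_one H₁ (hprop _ hH₁S) hr1 i (heq ▸ hf i)
    have hcard2 : ∀ t ∈ T, (Finset.univ.filter (fun i : ZMod (2^n) => f i = t)).card ≤ 2 := by
      intro t ht
      have htS : t ∈ S := by
        obtain ⟨i, _, rfl⟩ := Finset.mem_image.mp ht
        exact hfS i
      rcases (Finset.univ.filter (fun i : ZMod (2^n) => f i = t)).eq_empty_or_nonempty
        with he | ⟨a, haf⟩
      · simp [he]
      · have hsra : sr a ∈ t := (Finset.mem_filter.mp haf).2 ▸ hf a
        have hsubset : (Finset.univ.filter (fun i : ZMod (2^n) => f i = t))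
            ⊆ {a, a + c} := by
          intro b hb
          have hsrb : sr b ∈ t := (Finset.mem_filter.mp hb).2 ▸ hf b
          have hdiff := refl_diff (by omega) t (hpows t htS) hsra hsrb
          rcases double_ker (by omega) _ hdiff with h0 | h1
          · have : b = a := by linear_combination h0
            simp [this]
          · have : b = a + c := by rw [hcdef]; linear_combination h1
            simp [this]
        calc (Finset.univ.filter (fun i : ZMod (2^n) => f i = t)).card
            ≤ ({a, a + c} : Finset (ZMod (2^n))).card := Finset.card_le_card hsubset
        _ ≤ 2 := by
          apply le_trans (Finset.card_insert_le _ _)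
          simp
    have hsum : (2:ℕ)^n = ∑ t ∈ T, (Finset.univ.filter (fun i : ZMod (2^n) => f i = t)).card := by
      rw [← Finset.card_eq_sum_card_image f Finset.univ, Finset.card_univ, ZMod.card]
    have hbound : (2:ℕ)^n ≤ 2 * T.card := by
      calc (2:ℕ)^n
          = ∑ t ∈ T, (Finset.univ.filter (fun i : ZMod (2^n) => f i = t)).card := hsum
      _ ≤ ∑ _t ∈ T, 2 := Finset.sum_le_sum hcard2
      _ = 2 * T.card := by rw [Finset.sum_const, smul_eq_mul, mul_comm]
    have hTcard : T.card ≤ S.card - 1 := by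
      calc T.card ≤ (S.erase H₁).card := Finset.card_le_card hTsub
      _ = S.card - 1 := Finset.card_erase_of_mem hH₁S
    have hScard : 1 ≤ S.card := Finset.card_pos.mpr ⟨H₁, hH₁S⟩
    omega
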